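/- Let N be a symmetric norm on ℝ^n, let 0 < ε ≤ 1 and let k ≥ 1 be an integer. Assume that (ℝ^k, ℓ_∞) does not embed into (ℝ^n, N) with distortion 1/ε. Then for any nonzero vectors v₁, ..., v_k ∈ ℝ^n with pairwise disjoint supports, one has N(Σ_{i=1}^k v_i) > ε^{-1} · min_i N(v_i). -/

import Mathlib

noncomputable section
open scoped BigOperators

/-- `N` is a norm on `ℝⁿ`. -/
def IsNorm {n : ℕ} (N : (Fin n → ℝ) → ℝ) : Prop :=
  (∀ v, N v = 0 → v = 0) ∧ (∀ (c : ℝ) (v), N (c • v) = |c| * N v) ∧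
  (∀ v w, N (v + w) ≤ N v + N w)

/-- `N` is a symmetric norm on `ℝⁿ`. -/
def IsSymmetricNorm {n : ℕ} (N : (Fin n → ℝ) → ℝ) : Prop :=
  IsNorm N ∧ (∀ (σ : Equiv.Perm (Fin n)) (v : Fin n → ℝ), N (fun i => v (σ i)) = N v) ∧
  (∀ v : Fin n → ℝ, N (fun i => |v i|) = N v)

/-- `(ℝᵏ, NX)` embeds into `(ℝⁿ, NY)` with distortion `D`. -/
def EmbedsWithDistortion {k n : ℕ} (NX : (Fin k → ℝ) → ℝ) (NY : (Fin n → ℝ) → ℝ)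
    (D : ℝ) : Prop :=
  ∃ f : (Fin k → ℝ) →ₗ[ℝ] (Fin n → ℝ), ∀ x, NY (f x) ≤ NX x ∧ NX x ≤ D * NY (f x)

/-- The `ℓ_∞` norm on `ℝᵏ`. -/
def linftyNorm {k : ℕ} (α : Fin k → ℝ) : ℝ := ⨆ i, |α i|

namespace SymAux

variable {n : ℕ} {N : (Fin n → ℝ) → ℝ}

lemma norm_zero (hN : IsNorm N) : N 0 = 0 := by
  have := hN.2.1 0 0
  simpa using this

lemma norm_nonneg' (hN : IsNorm N) (v : Fin n → ℝ) : 0 ≤ N v := by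
  have h1 : N ((-1:ℝ) • v) = N v := by rw [hN.2.1]; simp
  have h2 := hN.2.2 v ((-1:ℝ) • v)
  have h3 : v + (-1:ℝ) • v = 0 := by simp
  rw [h3, norm_zero hN, h1] at h2
  linarith

lemma abs_inv (hN : IsSymmetricNorm N) (v : Fin n → ℝ) : N (fun i => |v i|) = N v :=
  hN.2.2 v

lemma update_le (hN : IsSymmetricNorm N) (w : Fin n → ℝ) (j : Fin n)
    (t : ℝ) (ht0 : 0 ≤ t) (ht1 : t ≤ 1) :
    N (Function.update w j (t * w j)) ≤ N w := by
  set w' : Fin n → ℝ := Function.update w j (-(w j)) with hw'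
  have hNw' : N w' = N w := by
    rw [← abs_inv hN w', ← abs_inv hN w]
    congr 1
    funext i
    by_cases h : i = j
    · subst h; simp [w']
    · simp [w', Function.update_of_ne h]
  have heq : Function.update w j (t * w j) = ((1+t)/2) • w + ((1-t)/2) • w' := by
    funext i
    by_cases h : i = j
    · subst h
      simp [w', Pi.add_apply, Pi.smul_apply, smul_eq_mul]
      ring
    · simp [w', Function.update_of_ne h, Pi.add_apply, Pi.smul_apply, smul_eq_mul]
      ring
  rw [heq]
  calc N (((1+t)/2) • w + ((1-t)/2) • w')
      ≤ N (((1+t)/2) • w) + N (((1-t)/2) • w') := hN.1.2.2 _ _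
    _ = ((1+t)/2) * N w + ((1-t)/2) * N w := by
        rw [hN.1.2.1, hN.1.2.1, hNw',
          abs_of_nonneg (by linarith : (0:ℝ) ≤ (1+t)/2),
          abs_of_nonneg (by linarith : (0:ℝ) ≤ (1-t)/2)]
    _ = N w := by ring

lemma mono_nonneg (hN : IsSymmetricNorm N) (u w : Fin n → ℝ)
    (hu : ∀ i, 0 ≤ u i) (huw : ∀ i, u i ≤ w i) : N u ≤ N w := by
  have key : ∀ s : Finset (Fin n), N (fun i => if i ∈ s then u i else w i) ≤ N w := by
    intro s
    induction s using Finset.induction_on with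
    | empty => simp
    | @insert j s hj ih =>
      set g : Fin n → ℝ := fun i => if i ∈ s then u i else w i with hg
      have hgj : g j = w j := by simp [g, hj]
      set t : ℝ := if w j = 0 then 0 else u j / w j with ht
      have hwj0 : 0 ≤ w j := le_trans (hu j) (huw j)
      have ht0 : 0 ≤ t := by
        rcases eq_or_ne (w j) 0 with h | h
        · simp [t, h]
        · simp only [t, h, if_false]
          exact div_nonneg (hu j) hwj0
      have ht1 : t ≤ 1 := by
        rcases eq_or_ne (w j) 0 with h | h
        · simp [t, h]
        · have hpos : 0 < w j := lt_of_le_of_ne hwj0 (Ne.symm h)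
          simp only [t, h, if_false]
          exact div_le_one_of_le₀ (huw j) hwj0
      have huj : u j = t * w j := by
        rcases eq_or_ne (w j) 0 with h | h
        · have : u j = 0 := le_antisymm (h ▸ huw j) (hu j)
          simp [t, h, this]
        · simp only [t, h, if_false]
          field_simp
      have heq : (fun i => if i ∈ insert j s then u i else w i)
          = Function.update g j (t * g j) := by
        funext i
        by_cases h : i = j
        · subst h; simp [Function.update_self, hgj, ← huj]
        · simp [Function.update_of_ne h, g, Finset.mem_insert, h]
      rw [heq]
      exact le_trans (update_le hN g j t ht0 ht1) ih
  have := key Finset.univ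
  simpa using this

lemma mono (hN : IsSymmetricNorm N) (u w : Fin n → ℝ)
    (h : ∀ i, |u i| ≤ |w i|) : N u ≤ N w := by
  rw [← abs_inv hN u, ← abs_inv hN w]
  exact mono_nonneg hN _ _ (fun i => abs_nonneg _) h

end SymAux

/-- If `ℓ_∞^k` does not embed with distortion `1/ε` into a symmetric normed space
`(ℝⁿ, N)`, then for nonzero vectors `v₁, …, v_k` with pairwise disjoint supports,
`N(∑ vᵢ) > ε⁻¹ · minᵢ N(vᵢ)`. -/
theorem disjoint_support_sum_lower_bound {n k : ℕ} (N : (Fin n → ℝ) → ℝ)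
    (hN : IsSymmetricNorm N) (ε : ℝ) (hε0 : 0 < ε) (hε1 : ε ≤ 1) (hk : 1 ≤ k)
    (hemb : ¬ EmbedsWithDistortion (linftyNorm (k := k)) N (1 / ε))
    (v : Fin k → (Fin n → ℝ)) (hne : ∀ i, v i ≠ 0)
    (hdisj : ∀ i j, i ≠ j → ∀ l, v i l = 0 ∨ v j l = 0) :
    ε⁻¹ * (⨅ i, N (v i)) < N (∑ i, v i) := by
  by_contra hcon
  push_neg at hcon
  apply hemb
  haveI : Nonempty (Fin k) := ⟨⟨0, hk⟩⟩
  set S : Fin n → ℝ := ∑ i, v i with hSdef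
  set m : ℝ := ⨅ i, N (v i) with hmdef
  -- at each coordinate, the sum of absolute values equals abs of sum
  have hone : ∀ (α : Fin k → ℝ) (l : Fin n),
      |∑ i, α i * v i l| = ∑ i, |α i * v i l| := by
    intro α l
    by_cases hex : ∃ i0, v i0 l ≠ 0
    · obtain ⟨i0, hi0⟩ := hex
      have h1 : ∑ i, α i * v i l = α i0 * v i0 l := by
        refine Finset.sum_eq_single i0 (fun i _ hi => ?_) (by simp)
        rcases hdisj i i0 hi l with h | h
        · simp [h]
        · exact absurd h hi0
      have h2 : ∑ i, |α i * v i l| = |α i0 * v i0 l| := by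
        refine Finset.sum_eq_single i0 (fun i _ hi => ?_) (by simp)
        rcases hdisj i i0 hi l with h | h
        · simp [h]
        · exact absurd h hi0
      rw [h1, h2]
    · push_neg at hex
      simp [hex]
  have hSl : ∀ l, |S l| = ∑ i, |v i l| := by
    intro l
    have := hone (fun _ => 1) l
    simpa [hSdef, Finset.sum_apply] using this
  -- linfty facts
  have hMle : ∀ (α : Fin k → ℝ) (i : Fin k), |α i| ≤ linftyNorm α := by
    intro α i
    simp only [linftyNorm]
    exact le_ciSup (f := fun i => |α i|) (Set.Finite.bddAbove (Set.finite_range fun i => |α i|)) i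
  have hM0 : ∀ α : Fin k → ℝ, 0 ≤ linftyNorm α := by
    intro α
    exact le_trans (abs_nonneg _) (hMle α (Classical.arbitrary _))
  have hMex : ∀ α : Fin k → ℝ, ∃ j0, linftyNorm α = |α j0| := by
    intro α
    obtain ⟨j0, hj0⟩ := Finite.exists_max (fun i => |α i|)
    refine ⟨j0, le_antisymm ?_ (hMle α j0)⟩
    simp only [linftyNorm]
    exact ciSup_le hj0
  -- upper bound
  have hupper : ∀ α : Fin k → ℝ, N (∑ i, α i • v i) ≤ linftyNorm α * N S := by
    intro α
    have h1 : N (∑ i, α i • v i) ≤ N (linftyNorm α • S) := by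
      apply SymAux.mono hN
      intro l
      have e1 : (∑ i, α i • v i) l = ∑ i, α i * v i l := by
        simp [Finset.sum_apply]
      rw [e1, hone α l, Pi.smul_apply, smul_eq_mul, abs_mul,
        abs_of_nonneg (hM0 α), hSl l, Finset.mul_sum]
      refine Finset.sum_le_sum (fun i _ => ?_)
      rw [abs_mul]
      exact mul_le_mul_of_nonneg_right (hMle α i) (abs_nonneg _)
    calc N (∑ i, α i • v i) ≤ N (linftyNorm α • S) := h1
      _ = linftyNorm α * N S := by rw [hN.1.2.1, abs_of_nonneg (hM0 α)]
  -- lower bound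
  have hlower : ∀ (α : Fin k → ℝ) (j : Fin k),
      |α j| * N (v j) ≤ N (∑ i, α i • v i) := by
    intro α j
    have h1 : N (α j • v j) ≤ N (∑ i, α i • v i) := by
      apply SymAux.mono hN
      intro l
      have e1 : (∑ i, α i • v i) l = ∑ i, α i * v i l := by
        simp [Finset.sum_apply]
      rw [e1, hone α l, Pi.smul_apply, smul_eq_mul]
      exact Finset.single_le_sum (f := fun i => |α i * v i l|) (fun i _ => abs_nonneg _) (Finset.mem_univ j)
    calc |α j| * N (v j) = N (α j • v j) := (hN.1.2.1 _ _).symm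
      _ ≤ _ := h1
  -- m facts
  obtain ⟨j1, hj1⟩ := Finite.exists_min (fun i => N (v i))
  have hm_eq : m = N (v j1) :=
    le_antisymm (ciInf_le (Set.Finite.bddBelow (Set.finite_range _)) j1) (le_ciInf hj1)
  have hm_le : ∀ i, m ≤ N (v i) := fun i =>
    ciInf_le (Set.Finite.bddBelow (Set.finite_range _)) i
  have hm_pos : 0 < m := by
    rw [hm_eq]
    rcases lt_or_eq_of_le (SymAux.norm_nonneg' hN.1 (v j1)) with h | h
    · exact h
    · exact absurd (hN.1.1 _ h.symm) (hne j1)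
  have hS_ge : N (v j1) ≤ N S := by
    have := hlower (fun _ => 1) j1
    simpa using this
  have hS_pos : 0 < N S := lt_of_lt_of_le hm_pos (hm_eq ▸ hS_ge)
  -- build the linear embedding
  refine ⟨{
    toFun := fun α => (N S)⁻¹ • ∑ i, α i • v i
    map_add' := by
      intro a b
      simp only [Pi.add_apply, add_smul, Finset.sum_add_distrib, smul_add]
    map_smul' := by
      intro c a
      simp only [Pi.smul_apply, smul_eq_mul, RingHom.id_apply]
      rw [smul_comm]
      congr 1
      rw [Finset.smul_sum]
      exact Finset.sum_congr rfl (fun i _ => by rw [smul_smul]) }, ?_⟩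
  intro x
  have hNfx : N ((N S)⁻¹ • ∑ i, x i • v i) = (N S)⁻¹ * N (∑ i, x i • v i) := by
    rw [hN.1.2.1, abs_of_nonneg (inv_nonneg.mpr (le_of_lt hS_pos))]
  obtain ⟨j0, hj0⟩ := hMex x
  constructor
  · show N ((N S)⁻¹ • ∑ i, x i • v i) ≤ linftyNorm x
    rw [hNfx]
    calc (N S)⁻¹ * N (∑ i, x i • v i) ≤ (N S)⁻¹ * (linftyNorm x * N S) := by
          exact mul_le_mul_of_nonneg_left (hupper x) (inv_nonneg.mpr (le_of_lt hS_pos))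
      _ = linftyNorm x := by field_simp
  · show linftyNorm x ≤ (1/ε) * N ((N S)⁻¹ • ∑ i, x i • v i)
    rw [hNfx]
    have h1 : |x j0| * m ≤ N (∑ i, x i • v i) := by
      calc |x j0| * m ≤ |x j0| * N (v j0) :=
            mul_le_mul_of_nonneg_left (hm_le j0) (abs_nonneg _)
        _ ≤ _ := hlower x j0
    have h2 : (ε⁻¹ * m)⁻¹ ≤ (N S)⁻¹ := by
      apply inv_anti₀ hS_pos hcon
    have h3 : (ε⁻¹ * m)⁻¹ * (|x j0| * m) ≤ (N S)⁻¹ * N (∑ i, x i • v i) := by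
      apply mul_le_mul h2 h1 (by positivity)
        (inv_nonneg.mpr (le_of_lt hS_pos))
    have h4 : (ε⁻¹ * m)⁻¹ * (|x j0| * m) = ε * |x j0| := by
      field_simp
    rw [h4] at h3
    rw [hj0]
    rw [one_div]
    calc |x j0| = ε⁻¹ * (ε * |x j0|) := by field_simp
      _ ≤ ε⁻¹ * ((N S)⁻¹ * N (∑ i, x i • v i)) :=
          mul_le_mul_of_nonneg_left h3 (inv_nonneg.mpr (le_of_lt hε0))
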